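/- Let x be a real number with x ≠ 1 and x ≠ −1, let n ≥ 1 be a natural number, and suppose that v_m(x) ≠ 0 for all odd m with 1 ≤ m ≤ n and u_m(x) ≠ 0 for all even m with 2 ≤ m ≤ n. Then the n-th ⊙-power of x satisfies: x^{⊙n} = u_n(x)/v_n(x) if n is odd, and x^{⊙n} = −v_n(x)/u_n(x) if n is even. -/

import Mathlib

open Real

/-- The tangent-addition operation `x ⊙ y = (x + y)/(1 - x*y)`. -/
noncomputable def odot (x y : ℝ) : ℝ := (x + y) / (1 - x * y)

/-- The `n`-th ⊙-power of `t`, for `n ≥ 1`: `t^{⊙1} = t`, `t^{⊙n} = t ⊙ t^{⊙(n-1)}`. -/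
noncomputable def opow (t : ℝ) : ℕ → ℝ
  | 0 => 0
  | 1 => t
  | (n + 2) => odot t (opow t (n + 1))

/-- The sequence `u_n(x)`: `u_0 = 1`, `u_1 = x`, `u_n = 2x·u_{n-1} - (1+x²)·u_{n-2}`. -/
noncomputable def u (x : ℝ) : ℕ → ℝ
  | 0 => 1
  | 1 => x
  | (n + 2) => 2 * x * u x (n + 1) - (1 + x ^ 2) * u x n

/-- The sequence `v_n(x)`: `v_0 = 0`, `v_1 = 1`, `v_n = 2x·v_{n-1} - (1+x²)·v_{n-2}`. -/
noncomputable def v (x : ℝ) : ℕ → ℝ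
  | 0 => 0
  | 1 => 1
  | (n + 2) => 2 * x * v x (n + 1) - (1 + x ^ 2) * v x n

lemma uv_succ (x : ℝ) : ∀ n : ℕ,
    u x (n + 1) = x * u x n - v x n ∧ v x (n + 1) = u x n + x * v x n := by
  intro n
  induction n using Nat.twoStepInduction with
  | zero => simp [u, v]
  | one => constructor <;> simp [u, v] <;> ring
  | more n ih1 ih2 =>
    have hu3 : u x (n + 2 + 1) = 2 * x * u x (n + 2) - (1 + x ^ 2) * u x (n + 1) := rfl
    have hv3 : v x (n + 2 + 1) = 2 * x * v x (n + 2) - (1 + x ^ 2) * v x (n + 1) := rfl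
    have hu2 : u x (n + 2) = 2 * x * u x (n + 1) - (1 + x ^ 2) * u x n := rfl
    have hv2 : v x (n + 2) = 2 * x * v x (n + 1) - (1 + x ^ 2) * v x n := rfl
    constructor
    · rw [hu3, hu2, hv2, ih1.1, ih1.2]; ring
    · rw [hv3, hu2, hv2, ih1.1, ih1.2]; ring

theorem opow_eq (x : ℝ) (hx1 : x ≠ 1) (hx2 : x ≠ -1) (n : ℕ) (hn : 1 ≤ n)
    (hv : ∀ m, 1 ≤ m → m ≤ n → Odd m → v x m ≠ 0)
    (hu : ∀ m, 2 ≤ m → m ≤ n → Even m → u x m ≠ 0) :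
    (Odd n → opow x n = u x n / v x n) ∧
    (Even n → opow x n = -(v x n / u x n)) := by
  induction n, hn using Nat.le_induction with
  | base =>
    constructor
    · intro _; simp [opow, u, v]
    · intro h; exact absurd h (by decide)
  | succ n hn ih =>
    have ih' := ih (fun m h1 h2 hm => hv m h1 (h2.trans n.le_succ) hm)
      (fun m h1 h2 hm => hu m h1 (h2.trans n.le_succ) hm)
    obtain ⟨k, rfl⟩ : ∃ k, n = k + 1 := ⟨n - 1, by omega⟩
    have hop : opow x (k + 1 + 1) = odot x (opow x (k + 1)) := rfl
    have hus := (uv_succ x (k + 1)).1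
    have hvs := (uv_succ x (k + 1)).2
    rcases Nat.even_or_odd (k + 1) with he | ho
    · -- n = k+1 even, n+1 odd
      have hun : u x (k + 1) ≠ 0 := hu (k + 1) (by rcases he with ⟨r, hr⟩; omega) (by omega) he
      have hvn1 : v x (k + 1 + 1) ≠ 0 := hv (k + 1 + 1) (by omega) le_rfl
        (by simpa using he.add_one)
      have hval : opow x (k + 1) = -(v x (k + 1) / u x (k + 1)) := ih'.2 he
      constructor
      · intro _
        rw [hop, hval, odot, hus, hvs]
        rw [hvs] at hvn1
        have e1 : x + -(v x (k + 1) / u x (k + 1)) = (x * u x (k + 1) - v x (k + 1)) / u x (k + 1) := by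
          field_simp; ring
        have e2 : 1 - x * -(v x (k + 1) / u x (k + 1)) = (u x (k + 1) + x * v x (k + 1)) / u x (k + 1) := by
          field_simp; ring
        rw [e1, e2, div_div_div_cancel_right₀ hun]
      · intro h
        exact absurd (by simpa using he.add_one) (Nat.not_odd_iff_even.mpr h)
    · -- n = k+1 odd, n+1 even
      have hvn : v x (k + 1) ≠ 0 := hv (k + 1) (by omega) (by omega) ho
      have hun1 : u x (k + 1 + 1) ≠ 0 := hu (k + 1 + 1) (by omega) le_rfl
        (by simpa using ho.add_one)
      have hval : opow x (k + 1) = u x (k + 1) / v x (k + 1) := ih'.1 ho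
      constructor
      · intro h
        exact absurd (by simpa using ho.add_one) (Nat.not_even_iff_odd.mpr h)
      · intro _
        rw [hop, hval, odot, hus, hvs]
        rw [hus] at hun1
        have hd : v x (k + 1) - x * u x (k + 1) ≠ 0 := fun h => hun1 (by linarith)
        field_simp
        ring
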